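/- For every musical interval σ ∈ 𝔖 one has 𝒩(K(σ)) ≤ 𝒩(σ), and equality holds if and only if σ = 𝔬 is the octave. -/
import Mathlib


/-- The positive rational numbers ℚ₊. -/
abbrev Qpos := {q : ℚ // 0 < q}

/-- Octave equivalence on ℚ₊: `q₁ ∼ q₂` iff `q₁ = 2^n * q₂` for some `n ∈ ℤ`. -/
def octaveRel (q₁ q₂ : Qpos) : Prop := ∃ n : ℤ, (q₁ : ℚ) = 2 ^ n * (q₂ : ℚ)

/-- The group of musical intervals `𝔖 = ℚ₊/∼`. -/
def MusInt := Quot octaveRel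

/-- The musical interval `[q]` represented by a positive rational `q`. -/
def cls (q : ℚ) (h : 0 < q) : MusInt := Quot.mk octaveRel ⟨q, h⟩

/-- The octave `𝔬 = [1/2]`. -/
def octave : MusInt := cls (1/2) (by norm_num)

/-- `repSpec σ (m, n)` says that `(m, n)` is a reduced representative of `σ`,
i.e. `σ = [m/n]`, `1/2 ≤ m/n < 1` and `gcd(n, m) = 1`. -/
def repSpec (σ : MusInt) (p : ℕ × ℕ) : Prop :=
  ∃ h : (0 : ℚ) < (p.1 : ℚ) / (p.2 : ℚ),
    σ = cls ((p.1 : ℚ) / (p.2 : ℚ)) h ∧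
    (1 : ℚ) / 2 ≤ (p.1 : ℚ) / (p.2 : ℚ) ∧ (p.1 : ℚ) / (p.2 : ℚ) < 1 ∧
    Nat.gcd p.2 p.1 = 1

open Classical in
/-- The canonical reduced representative `(m_σ, n_σ)` of a musical interval. -/
noncomputable def rep (σ : MusInt) : ℕ × ℕ :=
  if h : ∃ p, repSpec σ p then h.choose else (1, 2)

/-- The numerator `m_σ`, so that `σ = [m_σ/n_σ]`. -/
noncomputable def mVal (σ : MusInt) : ℕ := (rep σ).1

/-- The map `𝒩`, sending `σ` to the denominator `n_σ`, so that `σ = [m_σ/n_σ]`. -/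
noncomputable def nVal (σ : MusInt) : ℕ := (rep σ).2

/-- The Kepler map `K(σ) = [(n_σ - m_σ)/m_σ]`. -/
noncomputable def kepler (σ : MusInt) : MusInt :=
  if h : (0 : ℚ) < ((nVal σ : ℚ) - (mVal σ : ℚ)) / (mVal σ : ℚ) then
    cls (((nVal σ : ℚ) - (mVal σ : ℚ)) / (mVal σ : ℚ)) h
  else octave

/-- The height `𝔥(σ) = min {ℓ ∈ ℕ₀ : K^ℓ(σ) = 𝔬}`. -/
noncomputable def height (σ : MusInt) : ℕ := sInf {ℓ : ℕ | kepler^[ℓ] σ = octave}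

/-- `n` is an Euclidean Gauss–Wantzel number: `n = 2^k * 3^l * 5^m` with
`l, m ∈ {0, 1}` and `n > 1`. -/
def IsEuclidean (n : ℕ) : Prop :=
  1 < n ∧ ∃ k l m : ℕ, (l = 0 ∨ l = 1) ∧ (m = 0 ∨ m = 1) ∧ n = 2 ^ k * 3 ^ l * 5 ^ m

/-- `p` is a Fermat prime: a prime of the form `2^(2^n) + 1`. -/
def IsFermatPrime (p : ℕ) : Prop := p.Prime ∧ ∃ n : ℕ, p = 2 ^ (2 ^ n) + 1

/-- `n` is a Gauss–Wantzel number: `n > 1` is a power of `2` times a product of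
distinct Fermat primes. -/
def IsGaussWantzel (n : ℕ) : Prop :=
  1 < n ∧ ∃ (k : ℕ) (s : Finset ℕ), (∀ p ∈ s, IsFermatPrime p) ∧ n = 2 ^ k * ∏ p ∈ s, p

/-- `σ` is Euclidean consonant: all members of its second Kepler sequence are
Euclidean Gauss–Wantzel numbers. -/
def EuclideanConsonant (σ : MusInt) : Prop :=
  ∀ j ≤ height σ, IsEuclidean (nVal (kepler^[j] σ))

/-- `σ` is Gaussian consonant: all members of its second Kepler sequence are
Gauss–Wantzel numbers. -/
def GaussianConsonant (σ : MusInt) : Prop :=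
  ∀ j ≤ height σ, IsGaussWantzel (nVal (kepler^[j] σ))

-- auxiliary lemmas
lemma octaveRel_equivalence : Equivalence octaveRel := by
  constructor
  · intro q; exact ⟨0, by norm_num⟩
  · rintro q₁ q₂ ⟨n, h⟩
    refine ⟨-n, ?_⟩
    rw [h, ← mul_assoc, ← zpow_add₀ (by norm_num : (2:ℚ) ≠ 0), neg_add_cancel, zpow_zero, one_mul]
  · rintro q₁ q₂ q₃ ⟨n, h⟩ ⟨k, h'⟩
    exact ⟨n + k, by rw [h, h', ← mul_assoc, ← zpow_add₀ (by norm_num : (2:ℚ) ≠ 0)]⟩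

lemma cls_exact {x y : ℚ} {hx : 0 < x} {hy : 0 < y} (h : cls x hx = cls y hy) :
    ∃ t : ℤ, x = 2 ^ t * y :=
  (octaveRel_equivalence.eqvGen_iff).mp (Quot.eqvGen_exact h)

lemma cls_congr {x y : ℚ} (h : x = y) (hx : 0 < x) (hy : 0 < y) : cls x hx = cls y hy := by
  subst h; rfl

lemma cls_two_pow (k : ℤ) {x : ℚ} (hx : 0 < x) (hx' : 0 < 2 ^ k * x) :
    cls (2 ^ k * x) hx' = cls x hx := Quot.sound ⟨k, rfl⟩

lemma ratio_eq_of_bounds {x y : ℚ} {t : ℤ}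
    (hx1 : 1/2 ≤ x) (hx2 : x < 1) (hy1 : 1/2 ≤ y) (hy2 : y < 1)
    (h : x = 2 ^ t * y) : x = y := by
  have hy0 : (0:ℚ) < y := by linarith
  rcases lt_trichotomy t 0 with h1 | h1 | h1
  · exfalso
    have h2 : (2:ℚ) ^ t ≤ 2 ^ (-1 : ℤ) := zpow_le_zpow_right₀ one_le_two (by omega)
    have h3 : (2:ℚ) ^ (-1:ℤ) = 1/2 := by norm_num
    rw [h3] at h2
    nlinarith
  · rw [h1] at h; simpa using h
  · exfalso
    have h2 : (2:ℚ) ^ (1 : ℤ) ≤ 2 ^ t := zpow_le_zpow_right₀ one_le_two (by omega)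
    have h3 : (2:ℚ) ^ (1:ℤ) = 2 := by norm_num
    rw [h3] at h2
    nlinarith

lemma repSpec_unique {σ : MusInt} {p p' : ℕ × ℕ} (h : repSpec σ p) (h' : repSpec σ p') :
    p = p' := by
  obtain ⟨hp, heq, hl, hu, hg⟩ := h
  obtain ⟨hp', heq', hl', hu', hg'⟩ := h'
  obtain ⟨t, ht⟩ := cls_exact (heq.symm.trans heq')
  have hxy := ratio_eq_of_bounds hl hu hl' hu' ht
  -- denominators nonzero
  have hn2 : p.2 ≠ 0 := by rintro h0; rw [h0] at hp; simp at hp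
  have hn2' : p'.2 ≠ 0 := by rintro h0; rw [h0] at hp'; simp at hp'
  have hq2 : (0:ℚ) < (p.2 : ℚ) := by positivity
  have hq2' : (0:ℚ) < (p'.2 : ℚ) := by positivity
  have hcross : (p.1 : ℚ) * p'.2 = p'.1 * p.2 := by
    rw [div_eq_div_iff hq2.ne' hq2'.ne'] at hxy; exact hxy
  have hcrossN : p.1 * p'.2 = p'.1 * p.2 := by exact_mod_cast hcross
  have hco : Nat.Coprime p.2 p.1 := hg
  have hco' : Nat.Coprime p'.2 p'.1 := hg'
  have hd1 : p.2 ∣ p'.2 := by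
    have : p.2 ∣ p.1 * p'.2 := ⟨p'.1, by rw [hcrossN]; ring⟩
    exact hco.dvd_of_dvd_mul_left this
  have hd2 : p'.2 ∣ p.2 := by
    have : p'.2 ∣ p'.1 * p.2 := ⟨p.1, by rw [← hcrossN]; ring⟩
    exact hco'.dvd_of_dvd_mul_left this
  have hden : p.2 = p'.2 := Nat.dvd_antisymm hd1 hd2
  have hnum : p.1 = p'.1 := by
    have := hcrossN
    rw [hden] at this
    exact Nat.eq_of_mul_eq_mul_right (Nat.pos_of_ne_zero hn2') this
  exact Prod.ext hnum hden

lemma repSpec_exists (σ : MusInt) : ∃ p, repSpec σ p := by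
  induction σ using Quot.ind with
  | _ qq =>
    obtain ⟨q, hq⟩ := qq
    obtain ⟨k, hk1, hk2⟩ := exists_mem_Ico_zpow (y := (2:ℚ)) hq one_lt_two
    set x : ℚ := 2 ^ (-(k+1)) * q with hxdef
    have hx : 0 < x := by positivity
    have h2pow : ∀ s t : ℤ, (2:ℚ)^s * 2^t = 2^(s+t) := fun s t =>
      (zpow_add₀ (by norm_num : (2:ℚ) ≠ 0) s t).symm
    have hxlow : 1/2 ≤ x := by
      rw [hxdef]
      calc (1:ℚ)/2 = 2 ^ (-(k+1)) * 2 ^ k := by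
            rw [h2pow, show -(k+1) + k = (-1 : ℤ) from by ring]; norm_num
        _ ≤ 2 ^ (-(k+1)) * q := mul_le_mul_of_nonneg_left hk1 (by positivity)
    have hxhigh : x < 1 := by
      rw [hxdef]
      calc (2:ℚ) ^ (-(k+1)) * q < 2 ^ (-(k+1)) * 2 ^ (k+1) :=
            mul_lt_mul_of_pos_left hk2 (by positivity)
        _ = 1 := by rw [h2pow, show -(k+1) + (k+1) = (0 : ℤ) from by ring]; norm_num
    have hnum : 0 < x.num := Rat.num_pos.mpr hx
    have hcast : ((x.num.natAbs : ℚ)) = (x.num : ℚ) := by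
      have h2 := congrArg (fun z : ℤ => (z : ℚ)) (Int.natAbs_of_nonneg hnum.le)
      simp only [Int.cast_natCast] at h2
      exact h2
    have ratio : ((x.num.natAbs : ℚ)) / (x.den : ℚ) = x := by
      rw [hcast]; exact Rat.num_div_den x
    refine ⟨(x.num.natAbs, x.den), ?_⟩
    unfold repSpec
    simp only [ratio]
    refine ⟨hx, ?_, hxlow, hxhigh, x.reduced.symm⟩
    refine Quot.sound ⟨k+1, ?_⟩
    show q = 2 ^ (k+1) * x
    have hone : (2:ℚ) ^ (k+1) * (2:ℚ) ^ (-(k+1)) = 1 := by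
      rw [h2pow, show (k+1) + -(k+1) = (0:ℤ) from by ring]; norm_num
    rw [hxdef, ← mul_assoc, hone, one_mul]

lemma repSpec_rep (σ : MusInt) : repSpec σ (rep σ) := by
  rw [rep, dif_pos (repSpec_exists σ)]
  exact (repSpec_exists σ).choose_spec

lemma rep_eq {σ : MusInt} {p : ℕ × ℕ} (h : repSpec σ p) : rep σ = p :=
  repSpec_unique (repSpec_rep σ) h

lemma repSpec_octave : repSpec octave (1, 2) := by
  refine ⟨by norm_num, ?_, by norm_num, by norm_num, by norm_num⟩
  exact cls_congr (by norm_num) _ _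

lemma rep_octave : rep octave = (1, 2) := rep_eq repSpec_octave

lemma kepler_octave : kepler octave = octave := by
  have hm : mVal octave = 1 := by rw [mVal, rep_octave]
  have hn : nVal octave = 2 := by rw [nVal, rep_octave]
  rw [kepler, hm, hn]
  rw [dif_pos (by norm_num : (0:ℚ) < (((2:ℕ):ℚ) - ((1:ℕ):ℚ)) / ((1:ℕ):ℚ))]
  calc cls ((((2:ℕ):ℚ) - ((1:ℕ):ℚ)) / ((1:ℕ):ℚ)) _
      = cls (2 ^ (1:ℤ) * (1/2)) (by norm_num) := cls_congr (by norm_num) _ _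
    _ = octave := cls_two_pow 1 (by norm_num) _

lemma norm_bounds {q : ℚ} {k : ℤ} (hq : 0 < q) (hk1 : 2 ^ k ≤ q) (hk2 : q < 2 ^ (k+1)) :
    1/2 ≤ 2 ^ (-(k+1)) * q ∧ 2 ^ (-(k+1)) * q < 1 := by
  have h2pow : ∀ s t : ℤ, (2:ℚ)^s * 2^t = 2^(s+t) := fun s t =>
    (zpow_add₀ (by norm_num : (2:ℚ) ≠ 0) s t).symm
  constructor
  · calc (1:ℚ)/2 = 2 ^ (-(k+1)) * 2 ^ k := by
          rw [h2pow, show -(k+1) + k = (-1 : ℤ) from by ring]; norm_num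
      _ ≤ 2 ^ (-(k+1)) * q := mul_le_mul_of_nonneg_left hk1 (by positivity)
  · calc (2:ℚ) ^ (-(k+1)) * q < 2 ^ (-(k+1)) * 2 ^ (k+1) :=
          mul_lt_mul_of_pos_left hk2 (by positivity)
      _ = 1 := by rw [h2pow, show -(k+1) + (k+1) = (0 : ℤ) from by ring]; norm_num

/-- `𝒩(K(σ)) ≤ 𝒩(σ)`, with equality iff `σ` is the octave. -/
theorem nVal_kepler_le (σ : MusInt) :
    nVal (kepler σ) ≤ nVal σ ∧ (nVal (kepler σ) = nVal σ ↔ σ = octave) := by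
  obtain ⟨hpos, heq, hlow, hhigh, hgcd⟩ := repSpec_rep σ
  set m : ℕ := (rep σ).1 with hmdef
  set n : ℕ := (rep σ).2 with hndef
  have hmV : mVal σ = m := rfl
  have hnV : nVal σ = n := rfl
  have hn0 : n ≠ 0 := by rintro h0; rw [h0] at hpos; simp at hpos
  have hm0 : m ≠ 0 := by rintro h0; rw [h0] at hpos; simp at hpos
  have hnQ : (0:ℚ) < n := by positivity
  have hmQ : (0:ℚ) < m := by positivity
  have hmn : m < n := by
    have := (div_lt_one hnQ).mp hhigh
    exact_mod_cast this
  have hn2m : n ≤ 2 * m := by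
    have h1 : (1:ℚ) * n ≤ m * 2 := by
      rw [← div_le_div_iff₀ (by norm_num) hnQ]; exact hlow
    have : (n:ℚ) ≤ 2 * m := by linarith
    exact_mod_cast this
  rcases eq_or_lt_of_le hn2m with h2m | h2m
  · -- octave case : n = 2m
    have hm1 : m = 1 := by
      have hdvdn : m ∣ n := ⟨2, by omega⟩
      have hdvd : m ∣ Nat.gcd n m := Nat.dvd_gcd hdvdn dvd_rfl
      rw [hgcd] at hdvd
      exact Nat.dvd_one.mp hdvd
    have hn2 : n = 2 := by omega
    have hsig : σ = octave := by
      rw [heq]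
      exact cls_congr (by rw [← hmdef, ← hndef, hm1, hn2]; norm_num) _ _
    have h1 : nVal (kepler σ) = 2 := by rw [hsig, kepler_octave, nVal, rep_octave]
    have h2 : nVal σ = 2 := by rw [hnV, hn2]
    exact ⟨by omega, ⟨fun _ => hsig, fun _ => by omega⟩⟩
  · -- descent case : n < 2m
    set a : ℕ := n - m with hadef
    have ha0 : 0 < a := by omega
    have ham : a < m := by omega
    have hacast : ((a : ℕ) : ℚ) = (n:ℚ) - m := by
      rw [hadef]; exact_mod_cast Nat.cast_sub hmn.le
    have haQ : (0:ℚ) < a := by exact_mod_cast ha0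
    have hxpos : (0:ℚ) < (a:ℚ)/m := div_pos haQ hmQ
    have hposK : (0:ℚ) < ((n:ℚ) - m) / m := by rw [← hacast]; exact hxpos
    have hkeq : kepler σ = cls ((a:ℚ)/m) hxpos := by
      rw [kepler, hnV, hmV, dif_pos hposK]
      exact cls_congr (by rw [hacast]) _ _
    obtain ⟨k, hk1, hk2⟩ := exists_mem_Ico_zpow (x := (a:ℚ)/m) hxpos one_lt_two
    obtain ⟨hb1, hb2⟩ := norm_bounds hxpos hk1 hk2
    have hxlt1 : (a:ℚ)/m < 1 := by
      rw [div_lt_one hmQ]; exact_mod_cast ham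
    have hkneg : k < 0 := by
      by_contra hc
      push_neg at hc
      have h01 : (2:ℚ)^(0:ℤ) ≤ 2^k := zpow_le_zpow_right₀ one_le_two hc
      rw [zpow_zero] at h01; linarith
    set K : ℕ := (-(k+1)).toNat with hKdef
    have hK : ((K:ℕ):ℤ) = -(k+1) := Int.toNat_of_nonneg (by omega)
    have h2K : ((2:ℚ))^(K:ℕ) = (2:ℚ)^(-(k+1)) := by rw [← hK, zpow_natCast]
    set N0 : ℕ := 2^K * a with hN0def
    have hN0Q : ((N0:ℕ):ℚ) = 2^(-(k+1)) * a := by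
      rw [hN0def]; push_cast; rw [h2K]
    have hN0pos : 0 < N0 := by positivity
    set g : ℕ := Nat.gcd N0 m with hgdef
    have gpos : 0 < g := Nat.gcd_pos_of_pos_right _ (Nat.pos_of_ne_zero hm0)
    set m' : ℕ := N0 / g with hm'def
    set n' : ℕ := m / g with hn'def
    have e1 : m' * g = N0 := Nat.div_mul_cancel (Nat.gcd_dvd_left _ _)
    have e2 : n' * g = m := Nat.div_mul_cancel (Nat.gcd_dvd_right _ _)
    have hn'0 : n' ≠ 0 := by rintro h0; rw [h0, zero_mul] at e2; exact hm0 e2.symm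
    have hn'Q : (0:ℚ) < n' := by
      have := Nat.pos_of_ne_zero hn'0; positivity
    have ratioQ : (m':ℚ)/(n':ℚ) = (N0:ℚ)/(m:ℚ) := by
      rw [div_eq_div_iff hn'Q.ne' hmQ.ne']
      exact_mod_cast (show m' * m = N0 * n' from by rw [← e2, ← e1]; ring)
    have ratio2 : (N0:ℚ)/(m:ℚ) = 2^(-(k+1)) * ((a:ℚ)/m) := by
      rw [hN0Q, mul_div_assoc]
    have hratio : (m':ℚ)/(n':ℚ) = 2^(-(k+1)) * ((a:ℚ)/m) := ratioQ.trans ratio2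
    have hpos' : (0:ℚ) < (m':ℚ)/(n':ℚ) := by rw [hratio]; positivity
    have hrs : repSpec (kepler σ) (m', n') := by
      refine ⟨hpos', ?_, ?_, ?_, ?_⟩
      · rw [hkeq]
        calc cls ((a:ℚ)/m) hxpos
            = cls (2^(-(k+1)) * ((a:ℚ)/m)) (by positivity) :=
              (cls_two_pow (-(k+1)) hxpos (by positivity)).symm
          _ = cls ((m':ℚ)/(n':ℚ)) hpos' := cls_congr hratio.symm _ _
      · rw [hratio]; exact hb1
      · rw [hratio]; exact hb2
      · exact (Nat.coprime_div_gcd_div_gcd gpos).symm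
    have hrep : rep (kepler σ) = (m', n') := rep_eq hrs
    have hnK : nVal (kepler σ) = n' := by rw [nVal, hrep]
    have hle : n' ≤ m := by rw [hn'def]; exact Nat.div_le_self _ _
    have hlt : n' < n := lt_of_le_of_lt hle hmn
    refine ⟨by rw [hnK, hnV]; omega, ?_, ?_⟩
    · intro hEq; rw [hnK, hnV] at hEq; omega
    · intro hoct
      exfalso
      have hro := rep_octave
      rw [← hoct] at hro
      have hm1 : m = 1 := by rw [hmdef, hro]
      have hn1 : n = 2 := by rw [hndef, hro]
      omega
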